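/- Let X be a Priestley space. Then X is an Esakia space (for every open U ⊆ X, the down-set ↓U is open) if and only if for every clopen up-set V of X and every open down-set U of V (in the subspace topology and order), the set ↓U (downward closure computed in X) is open in X. -/
import Mathlib

open Set

/-- Priestley basis lemma: points of an open set have clopen (up-set ∩ down-set)
neighborhoods inside it. -/
lemma priestley_basis {X : Type*} [TopologicalSpace X] [PartialOrder X] [CompactSpace X]
    (htod : ∀ x y : X, ¬x ≤ y → ∃ U : Set X, IsClopen U ∧ IsUpperSet U ∧ x ∈ U ∧ y ∉ U)
    {U : Set X} (hU : IsOpen U) {u : X} (hu : u ∈ U) :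
    ∃ A B : Set X, IsClopen A ∧ IsUpperSet A ∧ IsClopen B ∧ IsLowerSet B ∧
      u ∈ A ∩ B ∧ A ∩ B ⊆ U := by
  classical
  -- for each y ∉ U, a clopen up- or down-set containing u but not y
  have key : ∀ y : X, y ∈ Uᶜ → ∃ C : Set X,
      IsClopen C ∧ (IsUpperSet C ∨ IsLowerSet C) ∧ u ∈ C ∧ y ∉ C := by
    intro y hy
    by_cases h1 : u ≤ y
    · by_cases h2 : y ≤ u
      · exact absurd (le_antisymm h1 h2 ▸ hu) hy
      · obtain ⟨D, hD, hDup, hyD, huD⟩ := htod y u h2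
        exact ⟨Dᶜ, hD.compl, Or.inr hDup.compl, huD, fun h => h hyD⟩
    · obtain ⟨C, hC, hCup, huC, hyC⟩ := htod u y h1
      exact ⟨C, hC, Or.inl hCup, huC, hyC⟩
  choose C hCclopen hCmono huC hyC using key
  -- compactness: Uᶜ is covered by the complements
  have hcomp : IsCompact Uᶜ := hU.isClosed_compl.isCompact
  have hcover : Uᶜ ⊆ ⋃ y : ↥Uᶜ, (C y.1 y.2)ᶜ := by
    intro y hy
    exact mem_iUnion.2 ⟨⟨y, hy⟩, hyC y hy⟩
  obtain ⟨t, ht⟩ := hcomp.elim_finite_subcover (fun y : ↥Uᶜ => (C y.1 y.2)ᶜ)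
    (fun y => (hCclopen y.1 y.2).compl.isOpen) hcover
  set A : Set X := ⋂ y ∈ t, if IsUpperSet (C y.1 y.2) then C y.1 y.2 else univ with hA
  set B : Set X := ⋂ y ∈ t, if IsUpperSet (C y.1 y.2) then univ else C y.1 y.2 with hB
  have hAB : A ∩ B = ⋂ y ∈ t, C y.1 y.2 := by
    ext x
    simp only [hA, hB, mem_inter_iff, mem_iInter]
    constructor
    · rintro ⟨h1, h2⟩ y hy
      by_cases hup : IsUpperSet (C y.1 y.2)
      · simpa [hup] using h1 y hy
      · simpa [hup] using h2 y hy
    · intro h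
      refine ⟨fun y hy => ?_, fun y hy => ?_⟩ <;>
        by_cases hup : IsUpperSet (C y.1 y.2) <;> simp [hup, h y hy]
  refine ⟨A, B, ?_, ?_, ?_, ?_, ?_, ?_⟩
  · exact Set.Finite.isClopen_biInter t.finite_toSet fun y hy => by
      by_cases hup : IsUpperSet (C y.1 y.2) <;> simp [hup, hCclopen y.1 y.2, isClopen_univ]
  · refine isUpperSet_iInter₂ fun y hy => ?_
    by_cases hup : IsUpperSet (C y.1 y.2) <;> simp [hup, isUpperSet_univ]
  · exact Set.Finite.isClopen_biInter t.finite_toSet fun y hy => by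
      by_cases hup : IsUpperSet (C y.1 y.2) <;> simp [hup, hCclopen y.1 y.2, isClopen_univ]
  · refine isLowerSet_iInter₂ fun y hy => ?_
    by_cases hup : IsUpperSet (C y.1 y.2)
    · simp [hup, isLowerSet_univ]
    · simpa [hup] using (hCmono y.1 y.2).resolve_left hup
  · rw [hAB]
    exact mem_iInter₂.2 fun y hy => huC y.1 y.2
  · rw [hAB]
    intro x hx
    by_contra hxU
    obtain ⟨y, hy, hy'⟩ := mem_iUnion₂.1 (ht hxU)
    exact hy' (mem_iInter₂.1 hx y hy)

/-- A Priestley space `X` is an Esakia space (the downward closure of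
every open set is open) iff for every clopen up-set `V` of `X` and every subset `U ⊆ V`
that is open in the subspace topology of `V` and a down-set for the induced order on `V`,
the downward closure `↓U` (computed in `X`) is open in `X`. -/
theorem stmt_14 {X : Type*} [TopologicalSpace X] [PartialOrder X] [CompactSpace X]
    (htod : ∀ x y : X, ¬x ≤ y → ∃ U : Set X, IsClopen U ∧ IsUpperSet U ∧ x ∈ U ∧ y ∉ U) :
    (∀ U : Set X, IsOpen U → IsOpen (↑(lowerClosure U) : Set X)) ↔
      ∀ V : Set X, IsClopen V → IsUpperSet V →
        ∀ U : Set X, U ⊆ V → (∃ W : Set X, IsOpen W ∧ U = W ∩ V) →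
          (∀ x ∈ V, ∀ y ∈ V, x ≤ y → y ∈ U → x ∈ U) →
          IsOpen (↑(lowerClosure U) : Set X) := by
  constructor
  · rintro h V hV _ U _ ⟨W, hW, rfl⟩ _
    exact h _ (hW.inter hV.isOpen)
  · intro h U hU
    rw [isOpen_iff_forall_mem_open]
    rintro x ⟨u, hu, hxu⟩
    obtain ⟨A, B, hA, hAup, hB, hBlow, huAB, hABU⟩ := priestley_basis htod hU hu
    refine ⟨↑(lowerClosure (A ∩ B)), ?_, ?_, ?_⟩
    · rintro z ⟨w, hw, hzw⟩
      exact ⟨w, hABU hw, hzw⟩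
    · exact h A hA hAup (A ∩ B) inter_subset_left ⟨B, hB.isOpen, inter_comm A B⟩
        fun a ha b hb hab hbAB => ⟨ha, hBlow hab hbAB.2⟩
    · exact ⟨u, huAB, hxu⟩
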